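/- Let f ∈ F((x^{-1})) be a formal Laurent series over a field F, and p(x)/q(x) a rational function in reduced form with q ≠ 0. If the valuation satisfies ||f(x) - p(x)/q(x)|| < -2·||q(x)|| (where ||·|| denotes the degree valuation on Laurent series, i.e. the largest exponent with nonzero coefficient), then p(x)/q(x) is a convergent of the continued fraction expansion of f. -/

import Mathlib

open Polynomial
open scoped Classical

noncomputable section

variable {F : Type*} [Field F]

/-- The element `x = T⁻¹` of `F((T))`: we regard `F((x⁻¹))` as the field of formal Laurent
series in `T = x⁻¹`. -/
def xx : LaurentSeries F := ((PowerSeries.X : PowerSeries F) : LaurentSeries F)⁻¹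

/-- Evaluation of a polynomial in the variable `x` inside `F((x⁻¹))`. -/
def pev (p : Polynomial F) : LaurentSeries F := Polynomial.aeval (xx : LaurentSeries F) p

/-- Degree valuation `‖f‖` on `F((x⁻¹))`: the largest exponent of `x` with nonzero
coefficient (i.e. `-order` in the variable `T = x⁻¹`), with `‖0‖ = ⊥`. -/
def degB (f : LaurentSeries F) : WithBot ℤ := if f = 0 then ⊥ else (-(f.order) : ℤ)

/-- The polynomial part of a Laurent series in `x⁻¹` (the terms with nonnegative powers
of `x`, i.e. exponents `≤ 0` of `T = x⁻¹`). -/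
def polyPart (f : LaurentSeries F) : LaurentSeries F :=
  ∑ i ∈ Finset.Icc f.order 0, HahnSeries.single i (f.coeff i)

/-- The complete quotients (tails) of the continued fraction algorithm for `f`. -/
def cfTail (f : LaurentSeries F) : ℕ → LaurentSeries F
  | 0 => f
  | n + 1 => (cfTail f n - polyPart (cfTail f n))⁻¹

/-- The `n`-th partial quotient `a_n(x)` of the continued fraction of `f`. -/
def cfA (f : LaurentSeries F) (n : ℕ) : LaurentSeries F := polyPart (cfTail f n)

/-- Numerators of the convergents, shifted by one: `cfP f (n+1) = p_n`. -/
def cfP (f : LaurentSeries F) : ℕ → LaurentSeries F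
  | 0 => 1
  | 1 => cfA f 0
  | n + 2 => cfA f (n + 1) * cfP f (n + 1) + cfP f n

/-- Denominators of the convergents, shifted by one: `cfQ f (n+1) = q_n`. -/
def cfQ (f : LaurentSeries F) : ℕ → LaurentSeries F
  | 0 => 0
  | 1 => 1
  | n + 2 => cfA f (n + 1) * cfQ f (n + 1) + cfQ f n

namespace LegAux

lemma xx_eq : (xx : LaurentSeries F) = HahnSeries.single (-1 : ℤ) 1 := by
  rw [xx, show ((PowerSeries.X : PowerSeries F) : LaurentSeries F) = HahnSeries.single (1:ℤ) 1 from
    HahnSeries.ofPowerSeries_X]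
  refine inv_eq_of_mul_eq_one_right ?_
  rw [HahnSeries.single_mul_single]; norm_num

lemma pev_coeff (p : Polynomial F) (i : ℤ) :
    (pev p).coeff i = if i ≤ 0 then p.coeff (-i).toNat else 0 := by
  induction p using Polynomial.induction_on' with
  | add u v hu hv =>
    simp only [pev] at hu hv ⊢
    rw [map_add, HahnSeries.coeff_add, hu, hv]
    split <;> simp
  | monomial n a =>
    simp only [pev, aeval_monomial, xx_eq, HahnSeries.single_pow, one_pow]
    rw [show (algebraMap F (LaurentSeries F)) a
        = HahnSeries.ofPowerSeries ℤ F (PowerSeries.C a) from rfl,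
      HahnSeries.ofPowerSeries_C, HahnSeries.C_apply]
    rw [HahnSeries.single_mul_single, HahnSeries.coeff_single, coeff_monomial]
    rw [show (n • (-1:ℤ)) = -(n:ℤ) by simp]
    by_cases h : i = 0 + -(n:ℤ)
    · subst h; simp
    · rw [if_neg h]
      split
      · rw [if_neg]; intro hc; apply h; subst hc; omega
      · rfl

lemma pev_ne_zero {q : Polynomial F} (hq : q ≠ 0) : pev q ≠ 0 := by
  intro h
  have := pev_coeff q (-(q.natDegree : ℤ))
  rw [h] at this
  simp only [HahnSeries.coeff_zero] at this
  rw [if_pos (by omega)] at this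
  simp at this
  exact leadingCoeff_ne_zero.mpr hq this.symm

lemma pev_order_ge {q : Polynomial F} (hq : q ≠ 0) : -(q.natDegree : ℤ) ≤ (pev q).order := by
  by_contra h
  push_neg at h
  have h1 := (mt HahnSeries.coeff_order_eq_zero.mp (pev_ne_zero hq))
  rw [pev_coeff] at h1
  by_cases h2 : (pev q).order ≤ 0
  · rw [if_pos h2] at h1
    exact h1 (Polynomial.coeff_eq_zero_of_natDegree_lt (by omega))
  · rw [if_neg h2] at h1; exact h1 rfl

/-- `g` is a "polynomial" element: no positive powers of `T = x⁻¹`. -/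
def Pol (g : LaurentSeries F) : Prop := ∀ i : ℤ, 0 < i → g.coeff i = 0

/-- `g` is "small": `‖g‖ < 0`. -/
def Sm (g : LaurentSeries F) : Prop := ∀ i : ℤ, i ≤ 0 → g.coeff i = 0

lemma Pol.add {u v : LaurentSeries F} (hu : Pol u) (hv : Pol v) : Pol (u + v) := by
  intro i hi; rw [HahnSeries.coeff_add, hu i hi, hv i hi, add_zero]

lemma Pol.mul {u v : LaurentSeries F} (hu : Pol u) (hv : Pol v) : Pol (u * v) := by
  intro i hi
  rw [HahnSeries.coeff_mul]
  refine Finset.sum_eq_zero fun ij hij => ?_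
  rw [Finset.mem_addAntidiagonal] at hij
  by_cases h1 : 0 < ij.1
  · rw [hu _ h1, zero_mul]
  · rw [hv _ (by omega), mul_zero]

lemma Pol.sub {u v : LaurentSeries F} (hu : Pol u) (hv : Pol v) : Pol (u - v) := by
  intro i hi; rw [HahnSeries.coeff_sub, hu i hi, hv i hi, sub_zero]

lemma Pol_zero : Pol (0 : LaurentSeries F) := fun i _ => rfl
lemma Pol_one : Pol (1 : LaurentSeries F) := by
  intro i hi; rw [HahnSeries.coeff_one, if_neg (by omega)]

lemma Pol_pev (p : Polynomial F) : Pol (pev p) := by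
  intro i hi; rw [pev_coeff, if_neg (by omega)]

lemma Pol_polyPart (g : LaurentSeries F) : Pol (polyPart g) := by
  intro i hi
  rw [polyPart, show (∑ j ∈ Finset.Icc g.order 0, HahnSeries.single j (g.coeff j)).coeff i
      = ∑ j ∈ Finset.Icc g.order 0, (HahnSeries.single j (g.coeff j)).coeff i from
    map_sum (HahnSeries.coeff.addMonoidHom i) _ _]
  refine Finset.sum_eq_zero fun j hj => ?_
  rw [Finset.mem_Icc] at hj
  rw [HahnSeries.coeff_single, if_neg (by omega)]

lemma Pol.order_nonpos {g : LaurentSeries F} (hg : Pol g) (h0 : g ≠ 0) : g.order ≤ 0 := by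
  by_contra h
  exact (mt HahnSeries.coeff_order_eq_zero.mp h0) (hg _ (by omega))

lemma Pol.eq_zero_of_sm {g : LaurentSeries F} (hg : Pol g) (hs : Sm g) : g = 0 := by
  ext i
  by_cases h : i ≤ 0
  · rw [hs i h]; rfl
  · rw [hg i (by omega)]; rfl

lemma Sm.sub {u v : LaurentSeries F} (hu : Sm u) (hv : Sm v) : Sm (u - v) := by
  intro i hi; rw [HahnSeries.coeff_sub, hu i hi, hv i hi, sub_zero]

lemma sm_of_order_pos {g : LaurentSeries F} (h : 0 < g.order) : Sm g := fun i hi =>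
  HahnSeries.coeff_eq_zero_of_lt_order (by omega)

lemma sm_zero : Sm (0 : LaurentSeries F) := fun i _ => rfl

lemma polyPart_coeff (g : LaurentSeries F) (i : ℤ) :
    (polyPart g).coeff i = if i ∈ Finset.Icc g.order 0 then g.coeff i else 0 := by
  rw [polyPart, show (∑ j ∈ Finset.Icc g.order 0, HahnSeries.single j (g.coeff j)).coeff i
      = ∑ j ∈ Finset.Icc g.order 0, (HahnSeries.single j (g.coeff j)).coeff i from
    map_sum (HahnSeries.coeff.addMonoidHom i) _ _]
  simp only [HahnSeries.coeff_single]
  by_cases h : i ∈ Finset.Icc g.order 0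
  · rw [if_pos h]
    convert (Finset.sum_eq_single_of_mem (f := fun x => if i = x then g.coeff x else 0) i h
      (fun b _ hb => if_neg (fun (e : i = b) => hb e.symm))).trans (if_pos rfl) using 2
    congr
  · rw [if_neg h]
    refine Finset.sum_eq_zero fun j hj => if_neg (fun (e : i = j) => h ?_)
    rwa [e]

lemma frac_sm (g : LaurentSeries F) : Sm (g - polyPart g) := by
  intro i hi
  rw [HahnSeries.coeff_sub, polyPart_coeff]
  by_cases h : i ∈ Finset.Icc g.order 0
  · rw [if_pos h, sub_self]
  · rw [if_neg h, sub_zero]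
    rw [Finset.mem_Icc] at h
    exact HahnSeries.coeff_eq_zero_of_lt_order (by omega)

lemma frac_order_pos {g : LaurentSeries F} (h : g - polyPart g ≠ 0) :
    0 < (g - polyPart g).order := by
  by_contra hc
  exact (mt HahnSeries.coeff_order_eq_zero.mp h) (frac_sm g _ (by omega))

lemma polyPart_spec {g : LaurentSeries F} (hg : g ≠ 0) (h : g.order ≤ 0) :
    polyPart g ≠ 0 ∧ (polyPart g).order = g.order := by
  have hc : (polyPart g).coeff g.order = g.coeff g.order := by
    rw [polyPart_coeff, if_pos (Finset.mem_Icc.mpr ⟨le_refl _, h⟩)]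
  have hne : polyPart g ≠ 0 := by
    intro h0
    rw [h0, HahnSeries.coeff_zero] at hc
    exact (mt HahnSeries.coeff_order_eq_zero.mp hg) hc.symm
  refine ⟨hne, le_antisymm ?_ ?_⟩
  · exact HahnSeries.order_le_of_coeff_ne_zero (by rw [hc]; exact (mt HahnSeries.coeff_order_eq_zero.mp hg))
  · by_contra hlt
    push_neg at hlt
    refine (mt HahnSeries.coeff_order_eq_zero.mp hne) ?_
    rw [polyPart_coeff]
    split
    · exact HahnSeries.coeff_eq_zero_of_lt_order hlt
    · rfl

lemma order_add_eq {u v : LaurentSeries F} (hu : u ≠ 0)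
    (h : ∀ i, i ≤ u.order → v.coeff i = 0) : u + v ≠ 0 ∧ (u + v).order = u.order := by
  have hc : (u + v).coeff u.order = u.coeff u.order := by
    rw [HahnSeries.coeff_add, h _ (le_refl _), add_zero]
  have hne : u + v ≠ 0 := by
    intro h0
    rw [h0, HahnSeries.coeff_zero] at hc
    exact (mt HahnSeries.coeff_order_eq_zero.mp hu) hc.symm
  refine ⟨hne, le_antisymm ?_ ?_⟩
  · exact HahnSeries.order_le_of_coeff_ne_zero (by rw [hc]; exact (mt HahnSeries.coeff_order_eq_zero.mp hu))
  · by_contra hlt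
    push_neg at hlt
    refine (mt HahnSeries.coeff_order_eq_zero.mp hne) ?_
    rw [HahnSeries.coeff_add, HahnSeries.coeff_eq_zero_of_lt_order hlt, h _ (le_of_lt hlt), add_zero]

lemma order_inv {g : LaurentSeries F} (hg : g ≠ 0) : (g⁻¹).order = -g.order := by
  have h1 : g * g⁻¹ = 1 := mul_inv_cancel₀ hg
  have h2 := HahnSeries.order_mul hg (inv_ne_zero hg)
  rw [h1, HahnSeries.order_one] at h2
  omega

end LegAux


namespace LegAux
variable (f : LaurentSeries F)

/-- nondegeneracy of the CF algorithm up to step `n`. -/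
def ND (n : ℕ) : Prop := ∀ k, k ≤ n → cfTail f k - cfA f k ≠ 0

lemma tail_succ (k : ℕ) : cfTail f (k + 1) = (cfTail f k - cfA f k)⁻¹ := rfl

lemma tail_spec {n : ℕ} (h : ND f n) : ∀ k, k ≤ n →
    cfTail f (k+1) ≠ 0 ∧ (cfTail f (k+1)).order < 0 := by
  intro k hk
  have hfr := h k hk
  have hop : 0 < (cfTail f k - cfA f k).order := frac_order_pos hfr
  refine ⟨by rw [tail_succ]; exact inv_ne_zero hfr, ?_⟩
  rw [tail_succ, order_inv hfr]; omega

lemma A_spec {n : ℕ} (h : ND f n) : ∀ k, k ≤ n →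
    cfA f (k+1) ≠ 0 ∧ (cfA f (k+1)).order = (cfTail f (k+1)).order := by
  intro k hk
  obtain ⟨h1, h2⟩ := tail_spec f h k hk
  exact polyPart_spec h1 (le_of_lt h2)

lemma tail_rec {n : ℕ} (h : ND f n) {k : ℕ} (hk : k ≤ n) :
    cfTail f k = cfA f k + (cfTail f (k+1))⁻¹ := by
  rw [tail_succ, inv_inv]; ring

lemma Q_spec {n : ℕ} (h : ND f n) : ∀ k, k ≤ n →
    cfQ f (k+1) ≠ 0 ∧ cfQ f (k+2) ≠ 0 ∧
    (cfQ f (k+2)).order = (cfA f (k+1)).order + (cfQ f (k+1)).order ∧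
    (cfQ f (k+2)).order ≤ -(k:ℤ) - 1 ∧
    (cfQ f (k+2)).order < (cfQ f (k+1)).order ∧ (cfQ f (k+1)).order ≤ 0 := by
  intro k hk
  induction k with
  | zero =>
    obtain ⟨hA', hAo'⟩ := A_spec f h 0 (by omega)
    obtain ⟨_, hto'⟩ := tail_spec f h 0 (by omega)
    have hto : (cfTail f 1).order < 0 := hto'
    have hA : cfA f 1 ≠ 0 := hA'
    have hAo : (cfA f 1).order = (cfTail f 1).order := hAo' 
    have hQ2 : cfQ f 2 = cfA f 1 := by
      show cfA f 1 * cfQ f 1 + cfQ f 0 = cfA f 1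
      show cfA f 1 * 1 + 0 = cfA f 1
      ring
    have h1 : (cfQ f 1 : LaurentSeries F) = 1 := rfl
    have hQ1o : (cfQ f 1).order = 0 := by rw [h1, HahnSeries.order_one]
    have hQ2o : (cfQ f 2).order < 0 := by rw [hQ2, hAo]; exact hto
    refine ⟨one_ne_zero, ?_, ?_, ?_, ?_, ?_⟩
    · show cfQ f 2 ≠ 0
      rw [hQ2]; exact hA
    · show (cfQ f 2).order = (cfA f 1).order + (cfQ f 1).order
      rw [hQ2, hQ1o, add_zero]
    · show (cfQ f 2).order ≤ -(0:ℤ) - 1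
      omega
    · show (cfQ f 2).order < (cfQ f 1).order
      omega
    · show (cfQ f 1).order ≤ 0
      omega
  | succ m ih =>
    obtain ⟨hQ1, hQ2, hQo, hQb, hQlt, hQle⟩ := ih (by omega)
    obtain ⟨hA, hAo⟩ := A_spec f h (m+1) (by omega)
    obtain ⟨_, hto'⟩ := tail_spec f h (m+1) (by omega)
    have hto : (cfTail f (m+2)).order < 0 := hto' 
    have hAneg : (cfA f (m+2)).order < 0 := by rw [hAo]; exact hto
    have hu : cfA f (m+2) * cfQ f (m+2) ≠ 0 := mul_ne_zero hA hQ2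
    have huo : (cfA f (m+2) * cfQ f (m+2)).order = (cfA f (m+2)).order + (cfQ f (m+2)).order :=
      HahnSeries.order_mul hA hQ2
    have hstep : cfQ f (m+3) = cfA f (m+2) * cfQ f (m+2) + cfQ f (m+1) := rfl
    have key := order_add_eq hu (v := cfQ f (m+1)) (fun i hi => by
      refine HahnSeries.coeff_eq_zero_of_lt_order ?_
      rw [huo] at hi; omega)
    rw [← hstep] at key
    have hAneg' : (cfA f (m+2)).order < 0 := by rw [hAo]; exact hto
    refine ⟨hQ2, key.1, ?_, ?_, ?_, ?_⟩
    · show (cfQ f (m+3)).order = (cfA f (m+2)).order + (cfQ f (m+2)).order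
      rw [key.2, huo]
    · show (cfQ f (m+3)).order ≤ -((m:ℤ)+1) - 1
      rw [key.2, huo]; omega
    · show (cfQ f (m+3)).order < (cfQ f (m+2)).order
      rw [key.2, huo]; omega
    · show (cfQ f (m+2)).order ≤ 0
      omega

lemma polPQ : ∀ n, (Pol (cfP f n) ∧ Pol (cfQ f n)) ∧ (Pol (cfP f (n+1)) ∧ Pol (cfQ f (n+1))) := by
  intro n
  induction n with
  | zero =>
    refine ⟨⟨Pol_one, Pol_zero⟩, ?_, Pol_one⟩
    exact Pol_polyPart _
  | succ m ih =>
    obtain ⟨⟨hP0, hQ0⟩, hP1, hQ1⟩ := ih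
    refine ⟨⟨hP1, hQ1⟩, ?_, ?_⟩
    · exact Pol.add (Pol.mul (Pol_polyPart _) hP1) hP0
    · exact Pol.add (Pol.mul (Pol_polyPart _) hQ1) hQ0

lemma det : ∀ n, cfP f (n+1) * cfQ f n - cfP f n * cfQ f (n+1)
    = (-1 : LaurentSeries F)^(n+1) := by
  intro n
  induction n with
  | zero =>
    show cfA f 0 * 0 - 1 * 1 = (-1 : LaurentSeries F)^1
    ring
  | succ m ih =>
    show (cfA f (m+1) * cfP f (m+1) + cfP f m) * cfQ f (m+1)
      - cfP f (m+1) * (cfA f (m+1) * cfQ f (m+1) + cfQ f m) = (-1 : LaurentSeries F)^(m+2)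
    rw [show ((-1 : LaurentSeries F))^(m+2) = (-1)^(m+1) * (-1) from pow_succ _ _]
    linear_combination (-(1 : LaurentSeries F)) * ih

lemma star {n : ℕ} (h : ND f n) :
    f * (cfQ f (n+1) * cfTail f (n+1) + cfQ f n)
      = cfP f (n+1) * cfTail f (n+1) + cfP f n := by
  induction n with
  | zero =>
    have hf : cfTail f 0 - cfA f 0 ≠ 0 := h 0 (le_refl _)
    have hc : (cfTail f 0 - cfA f 0) * cfTail f 1 = 1 := by
      rw [tail_succ]; exact mul_inv_cancel₀ hf
    show f * (1 * cfTail f 1 + 0) = cfA f 0 * cfTail f 1 + 1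
    have h0 : cfTail f 0 = f := rfl
    rw [h0] at hc
    linear_combination hc
  | succ m ih =>
    have hnd : ND f m := fun k hk => h k (by omega)
    have ih' := ih hnd
    have hfr : cfTail f (m+1) - cfA f (m+1) ≠ 0 := h (m+1) (le_refl _)
    have ht2 : cfTail f (m+2) ≠ 0 := by rw [tail_succ]; exact inv_ne_zero hfr
    have key : cfTail f (m+1) = cfA f (m+1) + (cfTail f (m+2))⁻¹ := tail_rec f h (le_refl _)
    have hc : (cfTail f (m+2))⁻¹ * cfTail f (m+2) = 1 := inv_mul_cancel₀ ht2
    rw [key] at ih'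
    show f * ((cfA f (m+1) * cfQ f (m+1) + cfQ f m) * cfTail f (m+2) + cfQ f (m+1))
      = (cfA f (m+1) * cfP f (m+1) + cfP f m) * cfTail f (m+2) + cfP f (m+1)
    linear_combination cfTail f (m+2) * ih' + (cfP f (m+1) - f * cfQ f (m+1)) * hc

lemma neg_one_pow_facts (n : ℕ) :
    ((-1 : LaurentSeries F)^n) ≠ 0 ∧ ((-1 : LaurentSeries F)^n).order = 0 := by
  have h1 : ((-1 : LaurentSeries F)^n) * ((-1)^n) = 1 := by
    rw [← mul_pow]; norm_num
  have h0 : ((-1 : LaurentSeries F)^n) ≠ 0 := left_ne_zero_of_mul_eq_one h1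
  have h2 := HahnSeries.order_mul h0 h0
  rw [h1, HahnSeries.order_one] at h2
  exact ⟨h0, by omega⟩

lemma D_spec {n : ℕ} (h : ND f n) :
    cfQ f (n+1) * cfTail f (n+1) + cfQ f n ≠ 0 ∧
    (cfQ f (n+1) * cfTail f (n+1) + cfQ f n).order
      = (cfQ f (n+1)).order + (cfTail f (n+1)).order := by
  obtain ⟨ht1', hto'⟩ := tail_spec f h n (le_refl _)
  have ht1 : cfTail f (n+1) ≠ 0 := ht1'
  have hto : (cfTail f (n+1)).order < 0 := hto'
  cases n with
  | zero =>
    have ht1b : cfTail f 1 ≠ 0 := ht1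
    have htob : (cfTail f 1).order < 0 := hto
    have hD : cfQ f 1 * cfTail f 1 + cfQ f 0 = cfTail f 1 := by
      show (1 : LaurentSeries F) * cfTail f 1 + 0 = cfTail f 1; ring
    rw [hD, show (cfQ f 1 : LaurentSeries F) = 1 from rfl, HahnSeries.order_one]
    refine ⟨ht1b, ?_⟩
    show (cfTail f 1).order = (0:ℤ) + (cfTail f 1).order
    omega
  | succ m =>
    have ht1c : cfTail f (m+2) ≠ 0 := ht1
    have htoc : (cfTail f (m+2)).order < 0 := hto
    obtain ⟨hQ1, hQ2, hQo, hQb, hQlt, hQle⟩ := Q_spec f h m (by omega)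
    have hu : cfQ f (m+2) * cfTail f (m+2) ≠ 0 := mul_ne_zero hQ2 ht1c
    have huo := HahnSeries.order_mul hQ2 ht1c
    have key := order_add_eq hu (v := cfQ f (m+1)) (fun i hi => by
      refine HahnSeries.coeff_eq_zero_of_lt_order ?_
      rw [huo] at hi; omega)
    refine ⟨key.1, ?_⟩
    show (cfQ f (m+2) * cfTail f (m+2) + cfQ f (m+1)).order
      = (cfQ f (m+2)).order + (cfTail f (m+2)).order
    rw [key.2, huo]

lemma G_spec {n : ℕ} (h : ND f n) :
    f * cfQ f (n+1) - cfP f (n+1) ≠ 0 ∧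
    (f * cfQ f (n+1) - cfP f (n+1)).order
      = -((cfQ f (n+1)).order + (cfTail f (n+1)).order) := by
  obtain ⟨hD, hDo⟩ := D_spec f h
  have h8 := star f h
  have h7 := det f n
  rw [show ((-1 : LaurentSeries F))^(n+1) = (-1)^n * (-1) from pow_succ _ _] at h7
  have hGD : (f * cfQ f (n+1) - cfP f (n+1)) * (cfQ f (n+1) * cfTail f (n+1) + cfQ f n)
      = (-1 : LaurentSeries F)^n := by
    linear_combination cfQ f (n+1) * h8 - h7
  obtain ⟨hpne, hpo⟩ := neg_one_pow_facts (F := F) n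
  have hG : f * cfQ f (n+1) - cfP f (n+1) ≠ 0 := by
    intro h0; rw [h0, zero_mul] at hGD; exact hpne hGD.symm
  have := HahnSeries.order_mul hG hD
  rw [hGD, hpo] at this
  exact ⟨hG, by omega⟩

end LegAux


namespace LegAux

lemma caseA (f : LaurentSeries F) {m : ℕ}
    (hnd : ∀ k, k < m → cfTail f k - cfA f k ≠ 0)
    (hterm : cfTail f m - cfA f m = 0) :
    cfQ f (m+1) ≠ 0 ∧ f * cfQ f (m+1) = cfP f (m+1) := by
  cases m with
  | zero =>
    have hf : f = cfA f 0 := by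
      have : cfTail f 0 = f := rfl
      rw [this] at hterm
      exact sub_eq_zero.mp hterm
    constructor
    · show (1 : LaurentSeries F) ≠ 0; exact one_ne_zero
    · show f * 1 = cfA f 0
      rw [mul_one]; exact hf
  | succ k =>
    have hndk : ND f k := fun j hj => hnd j (by omega)
    have h8 := star f hndk
    have ht : cfTail f (k+1) = cfA f (k+1) := sub_eq_zero.mp hterm
    rw [ht] at h8
    refine ⟨(Q_spec f hndk k (le_refl _)).2.1, ?_⟩
    show f * (cfA f (k+1) * cfQ f (k+1) + cfQ f k) = cfA f (k+1) * cfP f (k+1) + cfP f k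
    linear_combination h8

lemma caseB (f : LaurentSeries F) (p q : Polynomial F) (hq : q ≠ 0)
    (hR : pev q * f - pev p ≠ 0 → (q.natDegree:ℤ) < (pev q * f - pev p).order)
    {n : ℕ} (hnd : ND f n)
    (hord : -(q.natDegree:ℤ) ≤ (cfQ f (n+1)).order)
    (hexit : (cfQ f (n+2)).order < -(q.natDegree:ℤ)) :
    pev p * cfQ f (n+1) = pev q * cfP f (n+1) := by
  obtain ⟨hG, hGo⟩ := G_spec f hnd
  obtain ⟨hQ1, hQ2, hQo, _, _, _⟩ := Q_spec f hnd n (le_refl _)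
  obtain ⟨_, hAo⟩ := A_spec f hnd n (le_refl _)
  have hGo2 : (f * cfQ f (n+1) - cfP f (n+1)).order = -(cfQ f (n+2)).order := by
    rw [hGo, hQo, hAo]; ring
  have hu : pev q * (f * cfQ f (n+1) - cfP f (n+1)) ≠ 0 :=
    mul_ne_zero (pev_ne_zero hq) hG
  have huo : (pev q * (f * cfQ f (n+1) - cfP f (n+1))).order
      = (pev q).order + (f * cfQ f (n+1) - cfP f (n+1)).order :=
    HahnSeries.order_mul (pev_ne_zero hq) hG
  have hqord := pev_order_ge hq
  have huop : 0 < (pev q * (f * cfQ f (n+1) - cfP f (n+1))).order := by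
    rw [huo, hGo2]; omega
  have hsmu : Sm (pev q * (f * cfQ f (n+1) - cfP f (n+1))) := sm_of_order_pos huop
  have hsmv : Sm (cfQ f (n+1) * (pev q * f - pev p)) := by
    by_cases hRz : pev q * f - pev p = 0
    · rw [hRz, mul_zero]; exact sm_zero
    · refine sm_of_order_pos ?_
      rw [HahnSeries.order_mul hQ1 hRz]
      have := hR hRz
      omega
  have hδ : pev p * cfQ f (n+1) - pev q * cfP f (n+1)
      = pev q * (f * cfQ f (n+1) - cfP f (n+1)) - cfQ f (n+1) * (pev q * f - pev p) := by
    ring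
  have hpol : Pol (pev p * cfQ f (n+1) - pev q * cfP f (n+1)) :=
    Pol.sub (Pol.mul (Pol_pev p) (polPQ f n).2.2) (Pol.mul (Pol_pev q) (polPQ f n).2.1)
  have hz : pev p * cfQ f (n+1) - pev q * cfP f (n+1) = 0 := by
    refine Pol.eq_zero_of_sm hpol ?_
    rw [hδ]
    exact Sm.sub hsmu hsmv
  exact sub_eq_zero.mp hz

end LegAux


/-- **Legendre's theorem for Laurent series.** If `p/q` is in reduced form,
`q ≠ 0`, and `‖f - p/q‖ < -2‖q‖`, then `p/q` is a convergent of the continued fraction of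
`f`. -/
theorem legendre_laurent (f : LaurentSeries F) (p q : Polynomial F) (hq : q ≠ 0)
    (hred : IsCoprime p q)
    (happ : degB (f - pev p / pev q) < (((-(2 * (q.natDegree : ℤ))) : ℤ) : WithBot ℤ)) :
    ∃ n : ℕ, pev p / pev q = cfP f (n + 1) / cfQ f (n + 1) := by
  classical
  by_contra hcon
  push_neg at hcon
  set N : ℕ := q.natDegree with hN
  have hqne : pev q ≠ 0 := LegAux.pev_ne_zero hq
  have hqord := LegAux.pev_order_ge hq
  -- unpack the approximation hypothesis
  have hE : ∀ _ : f - pev p / pev q ≠ 0, 2*(N:ℤ) < (f - pev p / pev q).order := by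
    intro he
    rw [degB, if_neg he] at happ
    have := WithBot.coe_lt_coe.mp happ
    omega
  have hRe : pev q * f - pev p = pev q * (f - pev p / pev q) := by
    field_simp
  have hR : pev q * f - pev p ≠ 0 → (N:ℤ) < (pev q * f - pev p).order := by
    intro hRz
    have he : f - pev p / pev q ≠ 0 := by
      intro h0; rw [hRe, h0, mul_zero] at hRz; exact hRz rfl
    rw [hRe, HahnSeries.order_mul hqne he]
    have := hE he
    omega
  -- Case A yields a contradiction
  have hAfalse : ∀ m : ℕ, (∀ k, k < m → cfTail f k - cfA f k ≠ 0) →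
      cfTail f m - cfA f m = 0 → -(N:ℤ) ≤ (cfQ f (m+1)).order → False := by
    intro m hnd hterm hord
    obtain ⟨hQne, hfQ⟩ := LegAux.caseA f hnd hterm
    by_cases he : f - pev p / pev q = 0
    · refine hcon m ?_
      have hf : f = pev p / pev q := sub_eq_zero.mp he
      rw [← hf]
      rw [eq_div_iff hQne]
      exact hfQ
    · have hRz : pev q * f - pev p ≠ 0 := by
        rw [hRe]; exact mul_ne_zero hqne he
      have hw : pev q * cfP f (m+1) - pev p * cfQ f (m+1)
          = cfQ f (m+1) * (pev q * f - pev p)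
            + pev q * (cfP f (m+1) - f * cfQ f (m+1)) := by ring
      have hz : cfP f (m+1) - f * cfQ f (m+1) = 0 := by rw [← hfQ]; ring
      rw [hz, mul_zero, add_zero] at hw
      have hwne : pev q * cfP f (m+1) - pev p * cfQ f (m+1) ≠ 0 := by
        rw [hw]; exact mul_ne_zero hQne hRz
      have hwo : 0 < (pev q * cfP f (m+1) - pev p * cfQ f (m+1)).order := by
        rw [hw, HahnSeries.order_mul hQne hRz]
        have := hR hRz
        omega
      have hpol : LegAux.Pol (pev q * cfP f (m+1) - pev p * cfQ f (m+1)) :=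
        LegAux.Pol.sub (LegAux.Pol.mul (LegAux.Pol_pev q) (LegAux.polPQ f m).2.1)
          (LegAux.Pol.mul (LegAux.Pol_pev p) (LegAux.polPQ f m).2.2)
      exact hwne (LegAux.Pol.eq_zero_of_sm hpol (LegAux.sm_of_order_pos hwo))
  -- Case B yields a contradiction
  have hBfalse : ∀ n : ℕ, LegAux.ND f n → -(N:ℤ) ≤ (cfQ f (n+1)).order →
      (cfQ f (n+2)).order < -(N:ℤ) → False := by
    intro n hnd hord hexit
    have hPQ := LegAux.caseB f p q hq hR hnd hord hexit
    have hQne : cfQ f (n+1) ≠ 0 := (LegAux.Q_spec f hnd n (le_refl _)).1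
    refine hcon n ?_
    rw [div_eq_div_iff hqne hQne]
    linear_combination hPQ
  -- the inductive invariant
  have hInv : ∀ n : ℕ, (∀ k, k < n → cfTail f k - cfA f k ≠ 0) ∧
      -(N:ℤ) ≤ (cfQ f (n+1)).order := by
    intro n
    induction n with
    | zero =>
      refine ⟨fun k hk => absurd hk (by omega), ?_⟩
      have : (cfQ f 1).order = 0 := by
        rw [show (cfQ f 1 : LaurentSeries F) = 1 from rfl, HahnSeries.order_one]
      rw [this]
      omega
    | succ m ih =>
      obtain ⟨hnd, hord⟩ := ih
      have hterm : cfTail f m - cfA f m ≠ 0 := by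
        intro h0
        exact hAfalse m hnd h0 hord
      have hndm : LegAux.ND f m := by
        intro k hk
        rcases Nat.lt_or_ge k m with h | h
        · exact hnd k h
        · have : k = m := by omega
          rw [this]; exact hterm
      have hord2 : -(N:ℤ) ≤ (cfQ f (m+2)).order := by
        by_contra hlt
        push_neg at hlt
        exact hBfalse m hndm hord hlt
      exact ⟨fun k hk => hndm k (by omega), hord2⟩
  -- contradiction at n = N + 2
  obtain ⟨hnd, hord⟩ := hInv (N + 2)
  have hndN : LegAux.ND f (N+1) := fun k hk => hnd k (by omega)
  have hbound := (LegAux.Q_spec f hndN (N+1) (le_refl _)).2.2.2.1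
  have hb2 : (cfQ f (N+3)).order ≤ -((N:ℤ)+1) - 1 := by
    have h1 : (cfQ f (N+1+2)).order ≤ -((N+1:ℕ):ℤ) - 1 := hbound
    have h2 : (cfQ f (N+3)).order = (cfQ f (N+1+2)).order := rfl
    rw [h2]
    push_cast at h1 ⊢
    omega
  have hb3 : -(N:ℤ) ≤ (cfQ f (N+3)).order := by
    have : (cfQ f (N+2+1)).order = (cfQ f (N+3)).order := rfl
    rw [← this]
    exact hord
  omega

end
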